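/- The displacement field u(x,y) = (b/(2π))·( −xy/(2(1−ν)(x²+y²)), (1/(4(1−ν)))·[(x²−y²)/(x²+y²) + (1−2ν)·log(x²+y²)], 0 ) has total strain E_t = (∇u + (∇u)ᵀ)/2 whose difference from the edge-dislocation plastic strain E_p^E (with entries E₁₁ = −(b/(2π))y/(x²+y²), E₁₂ = E₂₁ = (b/(4π))x/(x²+y²), others zero) equals the elastic strain E_e^E given by E_e^E = (b/(4π(1−ν))) · [[ y((3−2ν)x²+(1−2ν)y²)/(x²+y²)², x(y²−x²)/(x²+y²)², 0], [x(y²−x²)/(x²+y²)², (−(1+2ν)x²y+(1−2ν)y³)/(x²+y²)², 0], [0,0,0]] at every (x,y) ≠ (0,0). -/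

import Mathlib

open Matrix

set_option maxHeartbeats 2000000 in
/-- The total strain of the edge-dislocation displacement field u minus the
plastic strain E_p^E equals the elastic strain E_e^E at every (x,y) ≠ (0,0). -/
theorem edge_elastic_strain (b ν : ℝ) (hν : ν ≠ 1)
    (u : ℝ → ℝ → ℝ → Fin 3 → ℝ)
    (hu : ∀ x y z : ℝ, u x y z =
      ![b / (2 * Real.pi) * (-(x * y) / (2 * (1 - ν) * (x ^ 2 + y ^ 2))),
        b / (2 * Real.pi) * ((1 / (4 * (1 - ν))) *
          ((x ^ 2 - y ^ 2) / (x ^ 2 + y ^ 2) + (1 - 2 * ν) * Real.log (x ^ 2 + y ^ 2))),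
        0])
    (x y z : ℝ) (h : (x, y) ≠ (0, 0)) :
    let G : Matrix (Fin 3) (Fin 3) ℝ := fun i j =>
      ![deriv (fun x' => u x' y z i) x,
        deriv (fun y' => u x y' z i) y,
        deriv (fun z' => u x y z' i) z] j
    let Et : Matrix (Fin 3) (Fin 3) ℝ := (1 / 2 : ℝ) • (G + Gᵀ)
    let Ep : Matrix (Fin 3) (Fin 3) ℝ :=
      !![-(b / (2 * Real.pi)) * y / (x ^ 2 + y ^ 2),
           (b / (4 * Real.pi)) * x / (x ^ 2 + y ^ 2), 0;
         (b / (4 * Real.pi)) * x / (x ^ 2 + y ^ 2), 0, 0;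
         0, 0, 0]
    Et - Ep =
      (b / (4 * Real.pi * (1 - ν))) •
        !![y * ((3 - 2 * ν) * x ^ 2 + (1 - 2 * ν) * y ^ 2) / (x ^ 2 + y ^ 2) ^ 2,
             x * (y ^ 2 - x ^ 2) / (x ^ 2 + y ^ 2) ^ 2, 0;
           x * (y ^ 2 - x ^ 2) / (x ^ 2 + y ^ 2) ^ 2,
             (-(1 + 2 * ν) * x ^ 2 * y + (1 - 2 * ν) * y ^ 3) / (x ^ 2 + y ^ 2) ^ 2, 0;
           0, 0, 0] := by
  intro G Et Ep
  have hr : x ^ 2 + y ^ 2 ≠ 0 := by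
    intro hc
    apply h
    have hx : x = 0 := by nlinarith [sq_nonneg x, sq_nonneg y]
    have hy : y = 0 := by nlinarith [sq_nonneg x, sq_nonneg y]
    simp [hx, hy]
  have hν' : (1 : ℝ) - ν ≠ 0 := sub_ne_zero.mpr (Ne.symm hν)
  have hπ : Real.pi ≠ 0 := Real.pi_ne_zero
  have hd1 : (2 * (1 - ν) * (x ^ 2 + y ^ 2)) ≠ 0 := by
    exact mul_ne_zero (mul_ne_zero two_ne_zero hν') hr
  -- derivative of the x²+y² in first variable
  have hr2x : ∀ a c : ℝ, HasDerivAt (fun t : ℝ => t ^ 2 + c ^ 2) (2 * a) a := by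
    intro a c
    simpa using (hasDerivAt_pow 2 a).add_const (c ^ 2)
  -- u₀, x-derivative
  have h0x : deriv (fun x' => u x' y z 0) x =
      b / (2 * Real.pi) * (y * (x ^ 2 - y ^ 2)) / (2 * (1 - ν) * (x ^ 2 + y ^ 2) ^ 2) := by
    have heq : (fun x' => u x' y z 0) =
        fun x' => b / (2 * Real.pi) * (-(x' * y) / (2 * (1 - ν) * (x' ^ 2 + y ^ 2))) := by
      funext x'; rw [hu]; simp
    rw [heq]
    have hn : HasDerivAt (fun x' : ℝ => -(x' * y)) (-y) x := by
      exact ((hasDerivAt_id' x).mul_const y).neg.congr_deriv (by ring)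
    have hd : HasDerivAt (fun x' : ℝ => 2 * (1 - ν) * (x' ^ 2 + y ^ 2))
        (2 * (1 - ν) * (2 * x)) x := (hr2x x y).const_mul _
    have := ((hn.div hd hd1).const_mul (b / (2 * Real.pi))).deriv
    refine this.trans ?_
    field_simp
    ring
  -- u₀, y-derivative
  have h0y : deriv (fun y' => u x y' z 0) y =
      b / (2 * Real.pi) * (x * (y ^ 2 - x ^ 2)) / (2 * (1 - ν) * (x ^ 2 + y ^ 2) ^ 2) := by
    have heq : (fun y' => u x y' z 0) =
        fun y' => b / (2 * Real.pi) * (-(x * y') / (2 * (1 - ν) * (x ^ 2 + y' ^ 2))) := by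
      funext y'; rw [hu]; simp
    rw [heq]
    have hn : HasDerivAt (fun y' : ℝ => -(x * y')) (-x) y := by
      exact ((hasDerivAt_id' y).const_mul x).neg.congr_deriv (by ring)
    have hd : HasDerivAt (fun y' : ℝ => 2 * (1 - ν) * (x ^ 2 + y' ^ 2))
        (2 * (1 - ν) * (2 * y)) y := by
      have : HasDerivAt (fun y' : ℝ => y' ^ 2 + x ^ 2) (2 * y) y := hr2x y x
      have h2 : HasDerivAt (fun y' : ℝ => x ^ 2 + y' ^ 2) (2 * y) y := by
        simpa [add_comm] using this
      exact h2.const_mul _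
    have := ((hn.div hd hd1).const_mul (b / (2 * Real.pi))).deriv
    refine this.trans ?_
    field_simp
    ring
  -- u₁, x-derivative
  have h1x : deriv (fun x' => u x' y z 1) x =
      b / (2 * Real.pi) * (1 / (4 * (1 - ν))) *
        (4 * x * y ^ 2 / (x ^ 2 + y ^ 2) ^ 2 + (1 - 2 * ν) * (2 * x) / (x ^ 2 + y ^ 2)) := by
    have heq : (fun x' => u x' y z 1) =
        fun x' => b / (2 * Real.pi) * ((1 / (4 * (1 - ν))) *
          ((x' ^ 2 - y ^ 2) / (x' ^ 2 + y ^ 2) + (1 - 2 * ν) * Real.log (x' ^ 2 + y ^ 2))) := by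
      funext x'; rw [hu]; simp
    rw [heq]
    have hnum : HasDerivAt (fun x' : ℝ => x' ^ 2 - y ^ 2) (2 * x) x := by
      simpa using (hasDerivAt_pow 2 x).sub_const (y ^ 2)
    have hq : HasDerivAt (fun x' : ℝ => (x' ^ 2 - y ^ 2) / (x' ^ 2 + y ^ 2))
        ((2 * x * (x ^ 2 + y ^ 2) - (x ^ 2 - y ^ 2) * (2 * x)) / (x ^ 2 + y ^ 2) ^ 2) x :=
      hnum.div (hr2x x y) hr
    have hlog : HasDerivAt (fun x' : ℝ => (1 - 2 * ν) * Real.log (x' ^ 2 + y ^ 2))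
        ((1 - 2 * ν) * (2 * x / (x ^ 2 + y ^ 2))) x :=
      (((hr2x x y).log hr)).const_mul _
    have := (((hq.add hlog).const_mul (1 / (4 * (1 - ν)))).const_mul (b / (2 * Real.pi))).deriv
    refine this.trans ?_
    field_simp
    ring
  -- u₁, y-derivative
  have h1y : deriv (fun y' => u x y' z 1) y =
      b / (2 * Real.pi) * (1 / (4 * (1 - ν))) *
        (-(4 * x ^ 2 * y) / (x ^ 2 + y ^ 2) ^ 2 + (1 - 2 * ν) * (2 * y) / (x ^ 2 + y ^ 2)) := by
    have heq : (fun y' => u x y' z 1) =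
        fun y' => b / (2 * Real.pi) * ((1 / (4 * (1 - ν))) *
          ((x ^ 2 - y' ^ 2) / (x ^ 2 + y' ^ 2) + (1 - 2 * ν) * Real.log (x ^ 2 + y' ^ 2))) := by
      funext y'; rw [hu]; simp
    rw [heq]
    have hden : HasDerivAt (fun y' : ℝ => x ^ 2 + y' ^ 2) (2 * y) y := by
      simpa [add_comm] using hr2x y x
    have hnum : HasDerivAt (fun y' : ℝ => x ^ 2 - y' ^ 2) (-(2 * y)) y := by
      simpa using ((hasDerivAt_pow 2 y).const_sub (x ^ 2))
    have hq : HasDerivAt (fun y' : ℝ => (x ^ 2 - y' ^ 2) / (x ^ 2 + y' ^ 2))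
        ((-(2 * y) * (x ^ 2 + y ^ 2) - (x ^ 2 - y ^ 2) * (2 * y)) / (x ^ 2 + y ^ 2) ^ 2) y :=
      hnum.div hden hr
    have hlog : HasDerivAt (fun y' : ℝ => (1 - 2 * ν) * Real.log (x ^ 2 + y' ^ 2))
        ((1 - 2 * ν) * (2 * y / (x ^ 2 + y ^ 2))) y :=
      ((hden.log hr)).const_mul _
    have := (((hq.add hlog).const_mul (1 / (4 * (1 - ν)))).const_mul (b / (2 * Real.pi))).deriv
    refine this.trans ?_
    field_simp
    ring
  -- z-derivatives vanish, third component vanishes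
  have hz : ∀ i, deriv (fun z' => u x y z' i) z = 0 := by
    intro i
    have heq : (fun z' => u x y z' i) = fun _ => u x y z i := by
      funext z'; rw [hu, hu]
    rw [heq, deriv_const]
  have h2x : deriv (fun x' => u x' y z 2) x = 0 := by
    have heq : (fun x' => u x' y z 2) = fun _ : ℝ => (0 : ℝ) := by
      funext x'; rw [hu]; simp
    rw [heq, deriv_const]
  have h2y : deriv (fun y' => u x y' z 2) y = 0 := by
    have heq : (fun y' => u x y' z 2) = fun _ : ℝ => (0 : ℝ) := by
      funext y'; rw [hu]; simp
    rw [heq, deriv_const]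
  have hπ2 : (2 : ℝ) * Real.pi ≠ 0 := mul_ne_zero two_ne_zero hπ
  have hf0 : (⟨0, by norm_num⟩ : Fin 3) = (0 : Fin 3) := rfl
  have hf1 : (⟨1, by norm_num⟩ : Fin 3) = (1 : Fin 3) := rfl
  have hf2 : (⟨2, by norm_num⟩ : Fin 3) = (2 : Fin 3) := rfl
  ext i j
  fin_cases i <;> fin_cases j <;>
    simp only [Et, Ep, hf0, hf1, hf2, Matrix.sub_apply, Matrix.smul_apply, Matrix.add_apply,
      Matrix.transpose_apply] <;>
    simp only [Et, Ep, G, hf0, hf1, hf2, Matrix.sub_apply, Matrix.smul_apply, Matrix.add_apply,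
      Matrix.transpose_apply, Matrix.cons_val', Matrix.cons_val_zero, Matrix.cons_val_one,
      Matrix.head_cons, Matrix.cons_val_fin_one, Matrix.empty_val',
      Matrix.cons_val_two, Matrix.tail_cons, Matrix.head_fin_const,
      Matrix.of_apply, smul_eq_mul, h0x, h0y, h1x, h1y, h2x, h2y, hz] <;>
    (try field_simp) <;> (try ring)
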